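/- Let B be the (2p)×(2p) matrix over Z[x] indexed by [p]×{0,1} with entry at ((α,γ),(α′,γ′)) equal to x^{γ′} if there exists β ∈ [p] with α + (p−1)/2 + γ = β + pγ′, and 0 otherwise. Then det(I − zB) = 1 − ((p+1)/2)(1+x)z + pxz². -/

import Mathlib

open Polynomial

/-- The weighted adjacency matrix of the transfer digraph on `[p] × {0,1}`: the
entry at `((α,γ),(α′,γ′))` is `x^{γ′}` if there is `β ∈ [p]` with
`α + (p−1)/2 + γ = β + pγ′`, and `0` otherwise. -/
noncomputable def transferMatrix (p : ℕ) :
    Matrix (Fin p × Fin 2) (Fin p × Fin 2) (Polynomial ℤ) :=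
  fun v w =>
    if ∃ β : Fin p, (v.1 : ℕ) + (p - 1) / 2 + (v.2 : ℕ) = (β : ℕ) + p * (w.2 : ℕ)
    then X ^ (w.2 : ℕ) else 0

private lemma sum_range_ite_lt {R : Type*} [AddCommMonoid R] (p a : ℕ) (ha : a ≤ p)
    (u w : R) :
    ∑ α ∈ Finset.range p, (if α + a < p then u else w) = (p - a) • u + a • w := by
  rw [Finset.range_eq_Ico,
    ← Finset.sum_Ico_consecutive _ (Nat.zero_le (p - a)) (Nat.sub_le p a)]
  have h1 : ∀ x ∈ Finset.Ico 0 (p - a), (if x + a < p then u else w) = u := by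
    intro x hx; simp only [Finset.mem_Ico] at hx; rw [if_pos]; omega
  have h2 : ∀ x ∈ Finset.Ico (p - a) p, (if x + a < p then u else w) = w := by
    intro x hx; simp only [Finset.mem_Ico] at hx; rw [if_neg]; omega
  rw [Finset.sum_congr rfl h1, Finset.sum_congr rfl h2, Finset.sum_const,
    Finset.sum_const, Nat.card_Ico, Nat.card_Ico, Nat.sub_zero, Nat.sub_sub_self ha]

private lemma sum_carry_zero {R : Type*} [AddCommMonoid R] (p a : ℕ) (ha : a ≤ p)
    (t : R) :
    ∑ α ∈ Finset.range p, (if (0 : ℕ) = (if α + a < p then 0 else 1) then t else 0) =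
      (p - a) • t := by
  have h : ∀ α, (if (0 : ℕ) = (if α + a < p then 0 else 1) then t else 0) =
      (if α + a < p then t else (0 : R)) := by
    intro α; split_ifs <;> simp_all
  rw [Finset.sum_congr rfl fun α _ => h α, sum_range_ite_lt p a ha, smul_zero, add_zero]

private lemma sum_carry_one {R : Type*} [AddCommMonoid R] (p a : ℕ) (ha : a ≤ p)
    (t : R) :
    ∑ α ∈ Finset.range p, (if (1 : ℕ) = (if α + a < p then 0 else 1) then t else 0) =
      a • t := by
  have h : ∀ α, (if (1 : ℕ) = (if α + a < p then 0 else 1) then t else 0) =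
      (if α + a < p then (0 : R) else t) := by
    intro α; split_ifs <;> simp_all
  rw [Finset.sum_congr rfl fun α _ => h α, sum_range_ite_lt p a ha, smul_zero, zero_add]

/-- `det(I − zB) = 1 − ((p+1)/2)(1+x)z + pxz²` for the transfer matrix `B`. -/
theorem transfer_matrix_char_det
    (p : ℕ) (hp : p.Prime) (hodd : Odd p) :
    Matrix.det
        (1 - (X : Polynomial (Polynomial ℤ)) • (transferMatrix p).map C) =
      1 - C ((((p + 1) / 2 : ℕ) : Polynomial ℤ) * (1 + X)) * X +
        C ((p : Polynomial ℤ) * X) * X ^ 2 := by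
  obtain ⟨k, hk⟩ := hodd
  have hp1 : 1 ≤ p := hp.one_le
  set R := Polynomial (Polynomial ℤ)
  set m := (p - 1) / 2 with hm
  have hmk : m = k := by omega
  -- rank-2 factorization  X • B.map C = A * Bc
  set A : Matrix (Fin p × Fin 2) (Fin 2) R :=
    fun v j => if (j : ℕ) = (if (v.1 : ℕ) + m + (v.2 : ℕ) < p then 0 else 1)
      then (X : R) * C (X ^ (j : ℕ)) else 0 with hA
  set Bc : Matrix (Fin 2) (Fin p × Fin 2) R :=
    fun j w => if w.2 = j then 1 else 0 with hBc
  have hiff : ∀ v w : Fin p × Fin 2,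
      (∃ β : Fin p, (v.1 : ℕ) + m + (v.2 : ℕ) = (β : ℕ) + p * (w.2 : ℕ)) ↔
      ((w.2 : ℕ) = if (v.1 : ℕ) + m + (v.2 : ℕ) < p then 0 else 1) := by
    intro v w
    have hv1 := v.1.isLt
    have hv2 := v.2.isLt
    have hw2 := w.2.isLt
    have hw2' : (w.2 : ℕ) = 0 ∨ (w.2 : ℕ) = 1 := by omega
    constructor
    · rintro ⟨β, hβ⟩
      have hβp := β.isLt
      rcases hw2' with h | h <;> rw [h] at hβ ⊢ <;> split_ifs <;> omega
    · intro h
      rcases hw2' with h' | h' <;> rw [h'] at h ⊢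
      · refine ⟨⟨(v.1 : ℕ) + m + (v.2 : ℕ), by split_ifs at h <;> omega⟩, by simp⟩
      · refine ⟨⟨(v.1 : ℕ) + m + (v.2 : ℕ) - p, by split_ifs at h <;> omega⟩, ?_⟩
        simp only [Fin.val_mk]; split_ifs at h <;> omega
  have hfact : (X : R) • (transferMatrix p).map C = A * Bc := by
    ext v w
    simp only [Matrix.smul_apply, Matrix.map_apply, Matrix.mul_apply, transferMatrix,
      smul_eq_mul]
    rw [Finset.sum_eq_single w.2
      (fun j _ hj => by rw [hBc]; simp only [if_neg (Ne.symm hj), mul_zero])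
      (fun h => absurd (Finset.mem_univ w.2) h)]
    simp only [hBc, eq_self_iff_true, if_true, mul_one, hA]
    by_cases hc : ∃ β : Fin p, (v.1 : ℕ) + m + (v.2 : ℕ) = (β : ℕ) + p * (w.2 : ℕ)
    · rw [if_pos hc, if_pos ((hiff v w).mp hc)]
    · rw [if_neg hc, if_neg (fun h => hc ((hiff v w).mpr h)), map_zero, mul_zero]
  rw [hfact, Matrix.det_one_sub_mul_comm, Matrix.det_fin_two]
  -- compute the 2×2 entries
  have key : ∀ j l : Fin 2, (Bc * A) j l =
      (if (l : ℕ) = 0 then p - (m + (j : ℕ)) else m + (j : ℕ)) •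
        ((X : R) * C (X ^ (l : ℕ))) := by
    intro j l
    have hma : m + (j : ℕ) ≤ p := by have := j.isLt; omega
    have hsum : (Bc * A) j l = ∑ α : Fin p, A (α, j) l := by
      rw [Matrix.mul_apply, Fintype.sum_prod_type]
      refine Finset.sum_congr rfl fun α _ => ?_
      rw [Finset.sum_eq_single j (fun γ _ hγ => by rw [hBc]; simp [hγ])
        (fun h => absurd (Finset.mem_univ j) h)]
      rw [hBc]; simp
    rw [hsum]
    simp only [hA, add_assoc]
    rw [Fin.sum_univ_eq_sum_range
      (fun α => if (l : ℕ) = (if α + (m + (j : ℕ)) < p then 0 else 1)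
        then (X : R) * C (X ^ (l : ℕ)) else 0)]
    have hl : (l : ℕ) = 0 ∨ (l : ℕ) = 1 := by have := l.isLt; omega
    rcases hl with h | h <;> rw [h]
    · rw [sum_carry_zero p _ hma, if_pos rfl]
    · rw [sum_carry_one p _ hma, if_neg (by norm_num : ¬(1 : ℕ) = 0)]
  simp only [Matrix.sub_apply, Matrix.one_apply, key]
  norm_num
  have e1 : p - m = k + 1 := by omega
  have e2 : p - (m + 1) = k := by omega
  have e4 : (p + 1) / 2 = k + 1 := by omega
  have e5 : (p : R) = 2 * (k : R) + 1 := by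
    rw [hk, Nat.cast_add, Nat.cast_mul, Nat.cast_one, Nat.cast_two]
  rw [e1, e2, e4, e5, hmk]
  push_cast
  ring
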